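/- Fix integers K ≥ 1, d ≥ 1, a label y ∈ {1,…,K}, a point w ∈ ℝ^d and η ∈ ℝ. Define softmax : ℝ^K → ℝ^K by softmax(z)_k = exp(z_k)/Σ_{j=1}^{K} exp(z_j) and let e_y ∈ ℝ^K be the one-hot vector for y. Let z_o, z_u : ℝ^d → ℝ^K be differentiable, with Jacobians at w denoted J_o, J_u ∈ ℝ^{K×d}; set q_u = softmax(z_u(w)), q_o = softmax(z_o(w)), and A ∈ ℝ^{K×K} with A_{ij} = (q_o)_i·(1(i=j) − (q_o)_j). Assume moreover that the map f : ℝ^d → ℝ^K, f(v) = softmax(z_o(v)), is differentiable everywhere and its Fréchet derivative is M-Lipschitz (‖Df(v) − Df(v')‖_op ≤ M·‖v − v'‖ for all v, v'). Let L(v) = −log( softmax(z_u(v))_y ) and w' = w − η·∇_w L(w). Then ‖ softmax(z_o(w')) − softmax(z_o(w)) − η·A·(J_o J_uᵀ)·( e_y − q_u ) ‖₂ ≤ M · η² · ‖J_u‖_op², where ‖J_u‖_op is the operator (spectral) norm of J_u. -/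

import Mathlib

open Finset

lemma taylor_half {E F : Type*} [NormedAddCommGroup E] [NormedSpace ℝ E]
    [NormedAddCommGroup F] [NormedSpace ℝ F] {f : E → F}
    (hf : Differentiable ℝ f) {M : ℝ}
    (hLip : ∀ v v', ‖fderiv ℝ f v - fderiv ℝ f v'‖ ≤ M * ‖v - v'‖) (a b : E) :
    ‖f b - f a - fderiv ℝ f a (b - a)‖ ≤ M / 2 * ‖b - a‖ ^ 2 := by
  set v := b - a with hv
  set φ : ℝ → F := fun t => f (a + t • v) - t • (fderiv ℝ f a v) - f a with hφ
  have hder : ∀ t : ℝ, HasDerivAt φ (fderiv ℝ f (a + t • v) v - fderiv ℝ f a v) t := by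
    intro t
    have h1 : HasDerivAt (fun t : ℝ => a + t • v) v t := by
      simpa using ((hasDerivAt_id t).smul_const v).const_add a
    have h2 : HasDerivAt (fun t : ℝ => f (a + t • v)) (fderiv ℝ f (a + t • v) v) t := by
      simpa [Function.comp_def] using (hf (a + t • v)).hasFDerivAt.comp_hasDerivAt t h1
    have h3 : HasDerivAt (fun t : ℝ => t • (fderiv ℝ f a v)) (fderiv ℝ f a v) t := by
      simpa using (hasDerivAt_id t).smul_const (fderiv ℝ f a v)
    simpa [hφ] using (h2.sub h3).sub_const (f a)
  have key := image_norm_le_of_norm_deriv_right_le_deriv_boundary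
    (f := φ) (f' := fun t => fderiv ℝ f (a + t • v) v - fderiv ℝ f a v)
    (a := 0) (b := 1)
    (B := fun t => M * ‖v‖ ^ 2 * t ^ 2 / 2) (B' := fun t => M * ‖v‖ ^ 2 * t)
    (fun t _ => (hder t).continuousAt.continuousWithinAt)
    (fun t _ => (hder t).hasDerivWithinAt)
    (by simp [hφ])
    (fun t => by
      have h := ((hasDerivAt_pow 2 t).const_mul (M * ‖v‖ ^ 2)).div_const 2
      refine h.congr_deriv ?_
      push_cast
      ring)
    (fun t ht => by
      have h1 : ‖fderiv ℝ f (a + t • v) - fderiv ℝ f a‖ ≤ M * (t * ‖v‖) := by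
        have := hLip (a + t • v) a
        simpa [norm_smul, abs_of_nonneg ht.1] using this
      calc ‖fderiv ℝ f (a + t • v) v - fderiv ℝ f a v‖
          = ‖(fderiv ℝ f (a + t • v) - fderiv ℝ f a) v‖ := by simp
        _ ≤ ‖fderiv ℝ f (a + t • v) - fderiv ℝ f a‖ * ‖v‖ :=
            ContinuousLinearMap.le_opNorm _ _
        _ ≤ M * (t * ‖v‖) * ‖v‖ := mul_le_mul_of_nonneg_right h1 (norm_nonneg v)
        _ = M * ‖v‖ ^ 2 * t := by ring)
  have h1 := key (Set.right_mem_Icc.2 zero_le_one)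
  simp only [hφ] at h1
  have e1 : a + (1:ℝ) • v = b := by rw [one_smul, hv]; abel
  rw [e1, one_smul] at h1
  have e2 : f b - fderiv ℝ f a v - f a = f b - f a - fderiv ℝ f a (b - a) := by
    rw [← hv]; abel
  rw [e2] at h1
  calc ‖f b - f a - fderiv ℝ f a (b - a)‖ ≤ M * ‖v‖ ^ 2 * 1 ^ 2 / 2 := h1
    _ = M / 2 * ‖b - a‖ ^ 2 := by rw [← hv]; ring

open Finset

noncomputable def smDeriv {K : ℕ} (z₀ : EuclideanSpace ℝ (Fin K)) :
    EuclideanSpace ℝ (Fin K) →L[ℝ] EuclideanSpace ℝ (Fin K) :=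
  ((PiLp.continuousLinearEquiv 2 ℝ (fun _ : Fin K => ℝ)).symm :
      (Fin K → ℝ) →L[ℝ] EuclideanSpace ℝ (Fin K)).comp
    (ContinuousLinearMap.pi fun i =>
      (Real.exp (z₀ i) / ∑ j, Real.exp (z₀ j)) • EuclideanSpace.proj (𝕜 := ℝ) i -
        (Real.exp (z₀ i) / ∑ j, Real.exp (z₀ j)) •
          ∑ j, (Real.exp (z₀ j) / ∑ j', Real.exp (z₀ j')) • EuclideanSpace.proj (𝕜 := ℝ) j)

lemma smDeriv_apply {K : ℕ} (z₀ h : EuclideanSpace ℝ (Fin K)) (i : Fin K) :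
    smDeriv z₀ h i = (Real.exp (z₀ i) / ∑ j, Real.exp (z₀ j)) * h i -
      (Real.exp (z₀ i) / ∑ j, Real.exp (z₀ j)) *
        ∑ j, (Real.exp (z₀ j) / ∑ j', Real.exp (z₀ j')) * h j := by
  simp [smDeriv, ContinuousLinearMap.sum_apply]

lemma hasFDerivAt_softmax {K : ℕ} (hK : 1 ≤ K)
    (softmax : EuclideanSpace ℝ (Fin K) → EuclideanSpace ℝ (Fin K))
    (hsm : ∀ z k, softmax z k = Real.exp (z k) / ∑ j, Real.exp (z j))
    (z₀ : EuclideanSpace ℝ (Fin K)) :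
    HasFDerivAt softmax (smDeriv z₀) z₀ := by
  have hNpos : ∀ z : EuclideanSpace ℝ (Fin K), 0 < ∑ j, Real.exp (z j) := fun z =>
    Finset.sum_pos (fun j _ => Real.exp_pos _) ⟨⟨0, hK⟩, Finset.mem_univ _⟩
  set T := (PiLp.continuousLinearEquiv 2 ℝ (fun _ : Fin K => ℝ)).symm with hT
  have hsm' : softmax = fun z => T (fun k => Real.exp (z k) / ∑ j, Real.exp (z j)) := by
    funext z; ext k
    rw [hsm]
    rfl
  rw [hsm', smDeriv]
  exact T.comp_hasFDerivAt_iff.mpr (by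
    apply hasFDerivAt_pi''
    intro i
    rw [ContinuousLinearMap.proj_pi]
    -- coordinate i : z ↦ exp (z i) * (∑ j, exp (z j))⁻¹
    have hproj : ∀ (j : Fin K) (z : EuclideanSpace ℝ (Fin K)),
        HasFDerivAt (fun z : EuclideanSpace ℝ (Fin K) => Real.exp (z j))
          (Real.exp (z j) • EuclideanSpace.proj (𝕜 := ℝ) j) z := by
      intro j z
      exact (Real.hasDerivAt_exp (z j)).comp_hasFDerivAt z
        (EuclideanSpace.proj (𝕜 := ℝ) j).hasFDerivAt
    have hN : HasFDerivAt (fun z : EuclideanSpace ℝ (Fin K) => ∑ j, Real.exp (z j))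
        (∑ j, Real.exp (z₀ j) • EuclideanSpace.proj (𝕜 := ℝ) j) z₀ :=
      HasFDerivAt.fun_sum fun j _ => hproj j z₀
    have hinv : HasFDerivAt (fun z : EuclideanSpace ℝ (Fin K) => (∑ j, Real.exp (z j))⁻¹)
        ((-((∑ j, Real.exp (z₀ j)) ^ 2)⁻¹) •
          (∑ j, Real.exp (z₀ j) • EuclideanSpace.proj (𝕜 := ℝ) j)) z₀ :=
      (hasDerivAt_inv (hNpos z₀).ne').comp_hasFDerivAt z₀ hN
    have hmul := (hproj i z₀).mul hinv
    have hfun : (fun z : EuclideanSpace ℝ (Fin K) =>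
        Real.exp (z i) / ∑ j, Real.exp (z j)) =
        fun z => Real.exp (z i) * (∑ j, Real.exp (z j))⁻¹ := by
      funext z; rw [div_eq_mul_inv]
    rw [hfun]
    refine hmul.congr_fderiv ?_; symm
    ext h
    have hN0 : (∑ j, Real.exp (z₀ j)) ≠ 0 := (hNpos z₀).ne'
    simp only [ContinuousLinearMap.sub_apply, ContinuousLinearMap.smul_apply,
      ContinuousLinearMap.add_apply, ContinuousLinearMap.sum_apply,
      PiLp.proj_apply, smul_eq_mul, div_eq_mul_inv, inv_pow]
    ring_nf
    simp only [mul_assoc, ← Finset.mul_sum]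
    ring)

set_option maxHeartbeats 2000000 in
/-- After one SGD step of learning rate `η` on the labelled sample `(x_u, y)`, the change of
the prediction on `x_o` equals `η·A·K(x_o,x_u)·(e_y − q_u)` up to a remainder bounded by
`M·η²·‖∇_w z(x_u)‖_op²`. -/
theorem stmt_8 (K d : ℕ) (hK : 1 ≤ K) (hd : 1 ≤ d) (y : Fin K)
    (w : EuclideanSpace ℝ (Fin d)) (η M : ℝ)
    (softmax : EuclideanSpace ℝ (Fin K) → EuclideanSpace ℝ (Fin K))
    (hsm : ∀ z k, softmax z k = Real.exp (z k) / ∑ j, Real.exp (z j))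
    (zo zu : EuclideanSpace ℝ (Fin d) → EuclideanSpace ℝ (Fin K))
    (hzod : Differentiable ℝ zo) (hzud : Differentiable ℝ zu)
    (Lo Lu : EuclideanSpace ℝ (Fin d) →L[ℝ] EuclideanSpace ℝ (Fin K))
    (hzo : HasFDerivAt zo Lo w) (hzu : HasFDerivAt zu Lu w)
    (Jo Ju : Fin K → Fin d → ℝ)
    (hJo : ∀ i l, Jo i l = Lo (EuclideanSpace.single l 1) i)
    (hJu : ∀ i l, Ju i l = Lu (EuclideanSpace.single l 1) i)
    (A : Fin K → Fin K → ℝ)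
    (hA : ∀ i j, A i j =
      softmax (zo w) i * ((if i = j then 1 else 0) - softmax (zo w) j))
    (hf : Differentiable ℝ (fun v => softmax (zo v)))
    (hLip : ∀ v v', ‖fderiv ℝ (fun x => softmax (zo x)) v -
        fderiv ℝ (fun x => softmax (zo x)) v'‖ ≤ M * ‖v - v'‖)
    (L : EuclideanSpace ℝ (Fin d) → ℝ)
    (hL : ∀ v, L v = -Real.log (softmax (zu v) y))
    (w' : EuclideanSpace ℝ (Fin d))
    (hw' : w' = w - η • gradient L w)
    (Δ : EuclideanSpace ℝ (Fin K))
    (hΔ : ∀ i, Δ i = ∑ j, ∑ j', A i j * (∑ l, Jo j l * Ju j' l) *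
      ((if j' = y then 1 else 0) - softmax (zu w) j')) :
    ‖softmax (zo w') - softmax (zo w) - η • Δ‖ ≤ M * η ^ 2 * ‖Lu‖ ^ 2 := by
  classical
  have hNpos : ∀ z : EuclideanSpace ℝ (Fin K), 0 < ∑ j, Real.exp (z j) := fun z =>
    Finset.sum_pos (fun j _ => Real.exp_pos _) ⟨⟨0, hK⟩, Finset.mem_univ _⟩
  have hq : ∀ k, softmax (zu w) k = Real.exp (zu w k) / ∑ j, Real.exp (zu w j) :=
    fun k => hsm _ k
  have hq0 : ∀ k, 0 ≤ softmax (zu w) k := fun k => by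
    rw [hq]; positivity
  have hqsum : ∑ k, softmax (zu w) k = 1 := by
    simp only [hq]
    rw [← Finset.sum_div, div_self (hNpos (zu w)).ne']
  have hq1 : ∀ k, softmax (zu w) k ≤ 1 := fun k =>
    hqsum ▸ Finset.single_le_sum (fun j _ => hq0 j) (Finset.mem_univ k)
  set u : EuclideanSpace ℝ (Fin K) := EuclideanSpace.single y 1 - softmax (zu w) with hudef
  have hu : ∀ j, u j = (if j = y then 1 else 0) - softmax (zu w) j := fun j => by
    simp [hudef, EuclideanSpace.single_apply]
  -- the gradient of L
  have hgrad : gradient L w = -(ContinuousLinearMap.adjoint Lu u) := by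
    have hDNu : HasFDerivAt (fun z : EuclideanSpace ℝ (Fin K) => ∑ j, Real.exp (z j))
        (∑ j, Real.exp (zu w j) • EuclideanSpace.proj (𝕜 := ℝ) j) (zu w) :=
      HasFDerivAt.fun_sum fun j _ => (Real.hasDerivAt_exp _).comp_hasFDerivAt _
        (EuclideanSpace.proj (𝕜 := ℝ) j).hasFDerivAt
    have hcomp : HasFDerivAt (fun v => ∑ j, Real.exp (zu v j))
        ((∑ j, Real.exp (zu w j) • EuclideanSpace.proj (𝕜 := ℝ) j).comp Lu) w :=
      hDNu.comp w hzu
    have hlog : HasFDerivAt (fun v => Real.log (∑ j, Real.exp (zu v j)))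
        ((∑ j, Real.exp (zu w j))⁻¹ •
          ((∑ j, Real.exp (zu w j) • EuclideanSpace.proj (𝕜 := ℝ) j).comp Lu)) w :=
      by have := (Real.hasDerivAt_log (hNpos (zu w)).ne').comp_hasFDerivAt w hcomp; exact this
    have hy : HasFDerivAt (fun v => (zu v) y) ((EuclideanSpace.proj (𝕜 := ℝ) y).comp Lu) w :=
      (EuclideanSpace.proj (𝕜 := ℝ) y).hasFDerivAt.comp w hzu
    have hLform : L = fun v => Real.log (∑ j, Real.exp (zu v j)) - (zu v) y := by
      funext v
      rw [hL, hsm, Real.log_div (Real.exp_ne_zero _) (hNpos (zu v)).ne', Real.log_exp]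
      ring
    have hLf : HasFDerivAt L
        (((∑ j, Real.exp (zu w j))⁻¹ •
            ((∑ j, Real.exp (zu w j) • EuclideanSpace.proj (𝕜 := ℝ) j).comp Lu)) -
          (EuclideanSpace.proj (𝕜 := ℝ) y).comp Lu) w := by
      rw [hLform]; exact hlog.sub hy
    have hGrad : HasGradientAt L (-(ContinuousLinearMap.adjoint Lu u)) w := by
      rw [hasGradientAt_iff_hasFDerivAt]
      refine hLf.congr_fderiv ?_; symm
      ext h
      rw [InnerProductSpace.toDual_apply_apply, inner_neg_left,
        ContinuousLinearMap.adjoint_inner_left, PiLp.inner_apply]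
      simp only [RCLike.inner_apply, conj_trivial, ContinuousLinearMap.coe_sub',
        Pi.sub_apply, ContinuousLinearMap.coe_smul', Pi.smul_apply,
        ContinuousLinearMap.coe_comp', Function.comp_apply,
        ContinuousLinearMap.coe_sum', Finset.sum_apply,
        PiLp.proj_apply, smul_eq_mul, hu, hq]
      have e2 : ∀ x : Fin K,
          ((if x = y then 1 else 0) - Real.exp (zu w x) / ∑ j, Real.exp (zu w j)) * Lu h x
          = (if x = y then Lu h x else 0) -
              (∑ j, Real.exp (zu w j))⁻¹ * (Real.exp (zu w x) * Lu h x) := by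
        intro x; by_cases hx : x = y <;> simp [hx] <;> ring
      rw [Finset.sum_congr rfl fun x _ => (mul_comm _ _).trans (e2 x), Finset.sum_sub_distrib,
        Finset.sum_ite_eq' Finset.univ y, ← Finset.mul_sum]
      simp [neg_sub]
    exact hGrad.gradient
  have hw'w : w' - w = η • (ContinuousLinearMap.adjoint Lu u) := by
    rw [hw', hgrad]
    module
  -- component formulas for the linear maps
  have hLo : ∀ (x : EuclideanSpace ℝ (Fin d)) (j : Fin K), Lo x j = ∑ l, Jo j l * x l := by
    intro x j
    have hx : x = ∑ l, x l • EuclideanSpace.single l (1:ℝ) := by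
      have h := (EuclideanSpace.basisFun (Fin d) ℝ).sum_repr x
      simp only [EuclideanSpace.basisFun_repr, EuclideanSpace.basisFun_apply] at h
      exact h.symm
    have : Lo x j = ((EuclideanSpace.proj (𝕜 := ℝ) j).comp Lo) x := rfl
    rw [this]
    conv_lhs => rw [hx]
    rw [map_sum]
    refine Finset.sum_congr rfl fun l _ => ?_
    rw [map_smul, hJo]
    simp [mul_comm]
  have hadj : ∀ l, (ContinuousLinearMap.adjoint Lu u) l = ∑ j', Ju j' l * u j' := by
    intro l
    have h1 : (ContinuousLinearMap.adjoint Lu u) l =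
        inner (𝕜 := ℝ) u (Lu (EuclideanSpace.single l (1:ℝ))) := by
      rw [← ContinuousLinearMap.adjoint_inner_left]
      rw [EuclideanSpace.inner_single_right]
      simp
    rw [h1, PiLp.inner_apply]
    simp only [RCLike.inner_apply, conj_trivial]
    exact Finset.sum_congr rfl fun j' _ => by rw [hJu]
  have hSA : ∀ (h : EuclideanSpace ℝ (Fin K)) (i : Fin K),
      smDeriv (zo w) h i = ∑ j, A i j * h j := by
    intro h i
    have e1 : ∑ j, A i j * h j
        = (∑ j, if i = j then softmax (zo w) i * h j else 0)
          - ∑ j, softmax (zo w) i * (softmax (zo w) j * h j) := by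
      rw [← Finset.sum_sub_distrib]
      refine Finset.sum_congr rfl fun j _ => ?_
      rw [hA]
      by_cases hij : i = j <;> simp [hij] <;> ring
    rw [e1, Finset.sum_ite_eq Finset.univ i, ← Finset.mul_sum, smDeriv_apply]
    simp [hsm]
  -- the fderiv of the observed prediction
  have hfd : fderiv ℝ (fun v => softmax (zo v)) w = (smDeriv (zo w)).comp Lo :=
    ((hasFDerivAt_softmax hK softmax hsm (zo w)).comp w hzo).fderiv
  have hlin : fderiv ℝ (fun v => softmax (zo v)) w (w' - w) = η • Δ := by
    rw [hfd, hw'w, ContinuousLinearMap.map_smul]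
    congr 1
    have hcoord : ∀ i, Δ i = ((smDeriv (zo w)).comp Lo) (ContinuousLinearMap.adjoint Lu u) i := by
      intro i
      rw [ContinuousLinearMap.comp_apply, hSA, hΔ i]
      refine Finset.sum_congr rfl fun j _ => ?_
      calc ∑ j', A i j * (∑ l, Jo j l * Ju j' l) *
            ((if j' = y then 1 else 0) - softmax (zu w) j')
          = ∑ j', ∑ l, A i j * (Jo j l * (Ju j' l * u j')) := by
            refine Finset.sum_congr rfl fun j' _ => ?_
            rw [← hu j', Finset.mul_sum, Finset.sum_mul]
            exact Finset.sum_congr rfl fun l _ => by ring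
        _ = ∑ l, ∑ j', A i j * (Jo j l * (Ju j' l * u j')) := Finset.sum_comm
        _ = A i j * Lo (ContinuousLinearMap.adjoint Lu u) j := by
            rw [hLo, Finset.mul_sum]
            refine Finset.sum_congr rfl fun l _ => ?_
            rw [hadj l, Finset.mul_sum, Finset.mul_sum]
    ext i; exact (hcoord i).symm
  -- Taylor estimate
  have htay := taylor_half (f := fun v => softmax (zo v)) hf hLip w w'
  rw [hlin] at htay
  -- nonnegativity of M
  have hM0 : 0 ≤ M := by
    have h := hLip (w + EuclideanSpace.single (⟨0, hd⟩ : Fin d) (1:ℝ)) w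
    rw [add_sub_cancel_left, EuclideanSpace.norm_single] at h
    simp only [norm_one, mul_one] at h
    exact le_trans (norm_nonneg _) h
  -- bound on ‖u‖
  have hnorm_u : ‖u‖ ^ 2 ≤ 2 := by
    have he : ‖u‖ ^ 2 = ∑ j, u j ^ 2 := by
      rw [EuclideanSpace.norm_eq, Real.sq_sqrt (Finset.sum_nonneg fun j _ => sq_nonneg _)]
      exact Finset.sum_congr rfl fun j _ => by rw [Real.norm_eq_abs, sq_abs]
    rw [he]
    have habs : ∀ j, |u j| ≤ 1 := by
      intro j
      rw [hu]
      by_cases hj : j = y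
      · rw [hj, if_pos rfl]
        have h1 : (0:ℝ) ≤ 1 - softmax (zu w) y := by linarith [hq1 y]
        rw [abs_of_nonneg h1]
        linarith [hq0 y]
      · simp only [if_neg hj]
        have h1 : (0:ℝ) - softmax (zu w) j ≤ 0 := by linarith [hq0 j]
        rw [zero_sub, abs_neg, abs_of_nonneg (hq0 j)]
        exact hq1 j
    calc ∑ j, u j ^ 2 ≤ ∑ j, |u j| := Finset.sum_le_sum fun j _ => by
          calc u j ^ 2 = |u j| * |u j| := by rw [← sq_abs]; ring
            _ ≤ 1 * |u j| := mul_le_mul_of_nonneg_right (habs j) (abs_nonneg _)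
            _ = |u j| := one_mul _
      _ ≤ ∑ j, ((if j = y then 1 else 0) + softmax (zu w) j) := Finset.sum_le_sum fun j _ => by
          rw [hu]
          refine le_trans (abs_sub _ _) ?_
          have h1 : |(if j = y then (1:ℝ) else 0)| = (if j = y then (1:ℝ) else 0) := by
            apply abs_of_nonneg; positivity
          rw [h1, abs_of_nonneg (hq0 j)]
      _ = 2 := by
          rw [Finset.sum_add_distrib, hqsum, Finset.sum_ite_eq' Finset.univ y]
          norm_num
  -- bound on the step
  have hadj_norm : ‖(ContinuousLinearMap.adjoint Lu : EuclideanSpace ℝ (Fin K) →L[ℝ]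
      EuclideanSpace ℝ (Fin d))‖ = ‖Lu‖ := LinearIsometryEquiv.norm_map _ Lu
  have hstep : ‖w' - w‖ ^ 2 ≤ η ^ 2 * (‖Lu‖ ^ 2 * 2) := by
    rw [hw'w, norm_smul, mul_pow, Real.norm_eq_abs, sq_abs]
    have h2 : ‖ContinuousLinearMap.adjoint Lu u‖ ≤ ‖Lu‖ * ‖u‖ := by
      calc ‖ContinuousLinearMap.adjoint Lu u‖
          ≤ ‖(ContinuousLinearMap.adjoint Lu : EuclideanSpace ℝ (Fin K) →L[ℝ]
              EuclideanSpace ℝ (Fin d))‖ * ‖u‖ := ContinuousLinearMap.le_opNorm _ _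
        _ = ‖Lu‖ * ‖u‖ := by rw [hadj_norm]
    have h3 : ‖ContinuousLinearMap.adjoint Lu u‖ ^ 2 ≤ ‖Lu‖ ^ 2 * 2 := by
      nlinarith [norm_nonneg (ContinuousLinearMap.adjoint Lu u), norm_nonneg u,
        norm_nonneg Lu]
    nlinarith [sq_nonneg η]
  calc ‖softmax (zo w') - softmax (zo w) - η • Δ‖ ≤ M / 2 * ‖w' - w‖ ^ 2 := htay
    _ ≤ M / 2 * (η ^ 2 * (‖Lu‖ ^ 2 * 2)) := by
        have := mul_le_mul_of_nonneg_left hstep (by linarith : (0:ℝ) ≤ M / 2)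
        linarith
    _ = M * η ^ 2 * ‖Lu‖ ^ 2 := by ring
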